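/- For every n ≥ 1, the intrinsic frontier (relative boundary, i.e., the frontier computed inside the affine span) of the permutohedron Π_{n−1} equals the union of the facets F_S over all nonempty proper subsets S ⊆ {1,…,n}. Equivalently, a point x ∈ Π_{n−1} lies in the intrinsic interior of Π_{n−1} if and only if ∑_{i∈S} x_i > |S|(|S|+1)/2 for every nonempty proper subset S. -/

import Mathlib

/-- The vertex `v_σ` of the permutohedron: its `i`-th coordinate is `σ⁻¹(i)`
(with values in `{1, …, n}`). -/
noncomputable def permuVertex (n : ℕ) (σ : Equiv.Perm (Fin n)) : Fin n → ℝ :=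
  fun i => ((σ⁻¹ i : ℕ) : ℝ) + 1

/-- The `(n-1)`-dimensional permutohedron `Π_{n-1} ⊆ ℝ^n`: the convex hull
of the `n!` points `v_σ`. -/
noncomputable def permutohedron (n : ℕ) : Set (Fin n → ℝ) :=
  convexHull ℝ (Set.range (permuVertex n))

/-- The facet `F_S` of the permutohedron, for a nonempty proper `S ⊆ {1, …, n}` with
`|S| = k`: the points of the permutohedron where `∑_{i ∈ S} x_i = k(k+1)/2`. -/
noncomputable def facet (n : ℕ) (S : Finset (Fin n)) : Set (Fin n → ℝ) :=
  {x ∈ permutohedron n |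
    ∑ i ∈ S, x i = ((S.card : ℝ) * ((S.card : ℝ) + 1)) / 2}

open Finset

noncomputable def mval (k : ℕ) : ℝ := (k : ℝ) * ((k : ℝ) + 1) / 2

def Hset (n : ℕ) : Set (Fin n → ℝ) :=
  {x | ∑ i, x i = mval n ∧ ∀ S : Finset (Fin n), mval S.card ≤ ∑ i ∈ S, x i}

theorem sum_distinct_ge (T : Finset ℕ) (h1 : ∀ t ∈ T, 1 ≤ t) :
    T.card * (T.card + 1) ≤ 2 * ∑ t ∈ T, t := by
  induction T using Finset.strongInduction with
  | _ T ih =>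
    rcases T.eq_empty_or_nonempty with rfl | hne
    · simp
    · have hmax := T.max'_mem hne
      have hcard : T.card ≤ T.max' hne := by
        have hsub : T ⊆ Finset.Icc 1 (T.max' hne) := by
          intro t ht
          exact Finset.mem_Icc.2 ⟨h1 t ht, T.le_max' t ht⟩
        calc T.card ≤ (Finset.Icc 1 (T.max' hne)).card := Finset.card_le_card hsub
          _ = T.max' hne := by rw [Nat.card_Icc]; omega
      have ih' := ih (T.erase (T.max' hne)) (Finset.erase_ssubset hmax)
        (fun t ht => h1 t (Finset.mem_of_mem_erase ht))
      have hc : (T.erase (T.max' hne)).card = T.card - 1 := Finset.card_erase_of_mem hmax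
      have hs : ∑ t ∈ T, t = T.max' hne + ∑ t ∈ T.erase (T.max' hne), t :=
        (Finset.add_sum_erase _ _ hmax).symm
      have hcpos : 1 ≤ T.card := Finset.card_pos.2 hne
      rw [hc] at ih'
      obtain ⟨m, hm⟩ : ∃ m, T.card = m + 1 := ⟨T.card - 1, by omega⟩
      rw [hm] at ih' hcard ⊢
      simp only [Nat.add_sub_cancel] at ih'
      nlinarith [ih', hcard, hs]

theorem gauss_real (n : ℕ) : ∑ j ∈ Finset.range n, ((j : ℝ) + 1) = mval n := by
  induction n with
  | zero => simp [mval]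
  | succ m ih => rw [Finset.sum_range_succ, ih]; simp [mval]; push_cast; ring

theorem sum_S_vertex (n : ℕ) (σ : Equiv.Perm (Fin n)) (S : Finset (Fin n)) :
    mval S.card ≤ ∑ i ∈ S, permuVertex n σ i := by
  classical
  set T : Finset ℕ := S.image (fun i => (σ⁻¹ i : ℕ) + 1) with hT
  have hinj : Set.InjOn (fun i => (σ⁻¹ i : ℕ) + 1) S := by
    intro a _ b _ hab
    simp only [add_left_inj] at hab
    exact (Equiv.injective σ⁻¹) (Fin.val_injective hab)
  have hcardT : T.card = S.card := Finset.card_image_of_injOn hinj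
  have h1 : ∀ t ∈ T, 1 ≤ t := by
    intro t ht
    obtain ⟨i, _, rfl⟩ := Finset.mem_image.1 ht
    omega
  have key := sum_distinct_ge T h1
  rw [hcardT] at key
  have hsum : ∑ i ∈ S, permuVertex n σ i = ((∑ t ∈ T, t : ℕ) : ℝ) := by
    rw [hT, Finset.sum_image hinj]
    push_cast
    rfl
  rw [hsum, mval]
  have : (S.card * (S.card + 1) : ℝ) ≤ 2 * ((∑ t ∈ T, t : ℕ) : ℝ) := by
    exact_mod_cast key
  linarith

theorem vertex_mem_H (n : ℕ) (σ : Equiv.Perm (Fin n)) : permuVertex n σ ∈ Hset n := by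
  constructor
  · have h1 : ∑ i, permuVertex n σ i = ∑ i : Fin n, (((i : ℕ) : ℝ) + 1) :=
      Equiv.sum_comp σ⁻¹ (fun i => ((i : ℕ) : ℝ) + 1)
    rw [h1, Fin.sum_univ_eq_sum_range (fun j => ((j : ℝ) + 1)) n, gauss_real]
  · exact sum_S_vertex n σ

theorem convex_H (n : ℕ) : Convex ℝ (Hset n) := by
  intro x hx y hy a b ha hb hab
  constructor
  · simp only [Pi.add_apply, Pi.smul_apply, smul_eq_mul, Finset.sum_add_distrib,
      ← Finset.mul_sum, hx.1, hy.1]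
    rw [← add_mul, hab, one_mul]
  · intro S
    have h1 := hx.2 S
    have h2 := hy.2 S
    simp only [Pi.add_apply, Pi.smul_apply, smul_eq_mul, Finset.sum_add_distrib,
      ← Finset.mul_sum]
    have h3 : a * mval S.card + b * mval S.card = mval S.card := by
      rw [← add_mul, hab, one_mul]
    linarith [mul_le_mul_of_nonneg_left h1 ha, mul_le_mul_of_nonneg_left h2 hb]

theorem closed_H (n : ℕ) : IsClosed (Hset n) := by
  have : Hset n = {x : Fin n → ℝ | ∑ i, x i = mval n} ∩
      ⋂ S : Finset (Fin n), {x | mval S.card ≤ ∑ i ∈ S, x i} := by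
    ext x; simp [Hset, Set.mem_iInter]
  rw [this]
  refine IsClosed.inter (isClosed_eq (by continuity) continuous_const) ?_
  exact isClosed_iInter fun S => isClosed_le continuous_const (by continuity)

theorem H_subset_Icc (n : ℕ) : Hset n ⊆ Set.Icc (fun _ => (1:ℝ)) (fun _ => (n:ℝ)) := by
  rintro x ⟨hsum, hS⟩
  constructor
  · intro i
    have := hS {i}
    simpa [mval] using this
  · intro i
    have h := hS (Finset.univ.erase i)
    have hcard : (Finset.univ.erase i).card = n - 1 :=
      by rw [Finset.card_erase_of_mem (Finset.mem_univ i), Finset.card_univ, Fintype.card_fin]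
    have hn1 : 1 ≤ n := by
      have : 0 < Fintype.card (Fin n) := Fintype.card_pos_iff.2 ⟨i⟩
      simp at this; omega
    have hsplit : x i + ∑ j ∈ Finset.univ.erase i, x j = mval n := by
      rw [Finset.add_sum_erase _ _ (Finset.mem_univ i)]; exact hsum
    rw [hcard] at h
    have hm : mval n - mval (n-1) = (n : ℝ) := by
      obtain ⟨m, rfl⟩ : ∃ m, n = m + 1 := ⟨n - 1, by omega⟩
      simp only [Nat.add_sub_cancel, mval]
      push_cast; ring
    simp only []
    linarith

theorem compact_H (n : ℕ) : IsCompact (Hset n) :=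
  IsCompact.of_isClosed_subset isCompact_Icc (closed_H n) (H_subset_Icc n)

theorem mval_super {a b i u : ℕ} (hu : u + i = a + b) (hia : i < a) (hib : i < b) :
    mval a + mval b < mval u + mval i := by
  have hc : (u : ℝ) + i = a + b := by exact_mod_cast hu
  have h1 : (i : ℝ) + 1 ≤ a := by exact_mod_cast hia
  have h2 : (i : ℝ) + 1 ≤ b := by exact_mod_cast hib
  unfold mval
  nlinarith [mul_pos (by linarith : (0:ℝ) < (a:ℝ) - i) (by linarith : (0:ℝ) < (b:ℝ) - i)]

theorem tight_chain {n : ℕ} {x : Fin n → ℝ} (hx : x ∈ Hset n) {S T : Finset (Fin n)}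
    (hS : ∑ l ∈ S, x l = mval S.card) (hT : ∑ l ∈ T, x l = mval T.card) :
    S ⊆ T ∨ T ⊆ S := by
  classical
  by_contra h
  push_neg at h
  have hi1 : (S ∩ T).card < S.card := by
    refine Finset.card_lt_card ?_
    refine Finset.ssubset_iff_subset_ne.2 ⟨Finset.inter_subset_left, ?_⟩
    intro he
    exact h.1 (by rw [← he] at *; exact fun a ha => Finset.mem_of_mem_inter_right (he ▸ ha))
  have hi2 : (S ∩ T).card < T.card := by
    refine Finset.card_lt_card ?_
    refine Finset.ssubset_iff_subset_ne.2 ⟨Finset.inter_subset_right, ?_⟩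
    intro he
    exact h.2 (fun a ha => Finset.mem_of_mem_inter_left (he ▸ ha))
  have hcards : (S ∪ T).card + (S ∩ T).card = S.card + T.card := Finset.card_union_add_card_inter S T
  have hu := hx.2 (S ∪ T)
  have hi := hx.2 (S ∩ T)
  have hsum : (∑ l ∈ S ∪ T, x l) + ∑ l ∈ S ∩ T, x l = (∑ l ∈ S, x l) + ∑ l ∈ T, x l :=
    Finset.sum_union_inter
  have := mval_super hcards hi1 hi2
  rw [hS, hT] at hsum
  linarith

theorem tight_flag {n : ℕ} {x : Fin n → ℝ} (hx : x ∈ Hset n)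
    (hext : ∀ y ∈ Hset n, ∀ z ∈ Hset n, x ∈ openSegment ℝ y z → y = x ∧ z = x) :
    ∀ k ≤ n, ∃ S : Finset (Fin n), (∑ l ∈ S, x l = mval S.card) ∧ S.card = k := by
  classical
  by_contra hcon
  push_neg at hcon
  obtain ⟨k, hk, hnok⟩ := hcon
  -- empty and univ are tight
  have hempty : ∑ l ∈ (∅ : Finset (Fin n)), x l = mval (∅ : Finset (Fin n)).card := by
    simp [mval]
  have huniv : ∑ l ∈ (Finset.univ : Finset (Fin n)), x l = mval (univ : Finset (Fin n)).card := by
    simpa [Finset.card_univ] using hx.1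
  have hk0 : 0 < k := by
    rcases Nat.eq_zero_or_pos k with rfl | h
    · exact absurd Finset.card_empty (hnok ∅ hempty)
    · exact h
  have hkn : k < n := by
    rcases lt_or_eq_of_le hk with h | rfl
    · exact h
    · exact absurd (by simp) (hnok univ huniv)
  -- low and high tight families
  set 𝒯 : Finset (Finset (Fin n)) :=
    Finset.univ.filter (fun S => ∑ l ∈ S, x l = mval S.card) with h𝒯
  have hmem𝒯 : ∀ S : Finset (Fin n), S ∈ 𝒯 ↔ ∑ l ∈ S, x l = mval S.card := by
    intro S; simp [h𝒯]
  set L := 𝒯.filter (fun S => S.card < k) with hL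
  set Hi := 𝒯.filter (fun S => k < S.card) with hHi
  have hLne : L.Nonempty := ⟨∅, by simp [hL, hmem𝒯, hempty, hk0]⟩
  have hHine : Hi.Nonempty := ⟨univ, by
    simp only [hHi, Finset.mem_filter]
    exact ⟨(hmem𝒯 _).2 huniv, by simpa using hkn⟩⟩
  obtain ⟨Smax, hSmaxL, hSmax⟩ := Finset.exists_max_image L Finset.card hLne
  obtain ⟨Tmin, hTminH, hTmin⟩ := Finset.exists_min_image Hi Finset.card hHine
  have hSmaxT : ∑ l ∈ Smax, x l = mval Smax.card :=
    (hmem𝒯 _).1 (Finset.mem_of_mem_filter _ hSmaxL)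
  have hTminT : ∑ l ∈ Tmin, x l = mval Tmin.card :=
    (hmem𝒯 _).1 (Finset.mem_of_mem_filter _ hTminH)
  have hScard : Smax.card < k := (Finset.mem_filter.1 hSmaxL).2
  have hTcard : k < Tmin.card := (Finset.mem_filter.1 hTminH).2
  have hST : Smax ⊆ Tmin := by
    rcases tight_chain hx hSmaxT hTminT with h | h
    · exact h
    · exact absurd (Finset.card_le_card h) (by omega)
  -- every tight set is below Smax or above Tmin
  have hkey : ∀ U : Finset (Fin n), ∑ l ∈ U, x l = mval U.card → U ⊆ Smax ∨ Tmin ⊆ U := by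
    intro U hU
    rcases lt_trichotomy U.card k with h | h | h
    · left
      have hUL : U ∈ L := by simp [hL, hmem𝒯, hU, h]
      rcases tight_chain hx hU hSmaxT with h' | h'
      · exact h'
      · exact (Finset.eq_of_subset_of_card_le h' (hSmax U hUL)).symm ▸ Finset.Subset.refl _
    · exact absurd h (hnok U hU)
    · right
      have hUH : U ∈ Hi := by simp [hHi, hmem𝒯, hU, h]
      rcases tight_chain hx hU hTminT with h' | h'
      · exact (Finset.eq_of_subset_of_card_le h' (hTmin U hUH)) ▸ Finset.Subset.refl _
      · exact h'
  -- pick two elements of Tmin \ Smax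
  have hdcard : 1 < (Tmin \ Smax).card := by
    rw [Finset.card_sdiff_of_subset hST]; omega
  obtain ⟨i, hi, j, hj, hij⟩ := Finset.one_lt_card.1 hdcard
  have hiS : i ∉ Smax := (Finset.mem_sdiff.1 hi).2
  have hjS : j ∉ Smax := (Finset.mem_sdiff.1 hj).2
  have hiT : i ∈ Tmin := (Finset.mem_sdiff.1 hi).1
  have hjT : j ∈ Tmin := (Finset.mem_sdiff.1 hj).1
  -- slack bound
  obtain ⟨ε, hε, hslack⟩ : ∃ ε : ℝ, 0 < ε ∧ ∀ S : Finset (Fin n),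
      (∑ l ∈ S, x l ≠ mval S.card) → ε ≤ ∑ l ∈ S, x l - mval S.card := by
    set 𝒩 : Finset (Finset (Fin n)) :=
      Finset.univ.filter (fun S => ∑ l ∈ S, x l ≠ mval S.card) with h𝒩
    rcases 𝒩.eq_empty_or_nonempty with he | hne
    · refine ⟨1, one_pos, fun S hS => absurd ?_ (Finset.notMem_empty S)⟩
      rw [← he]; simp [h𝒩, hS]
    · obtain ⟨S₀, hS₀, hmin⟩ :=
        Finset.exists_min_image 𝒩 (fun S => ∑ l ∈ S, x l - mval S.card) hne
      have hS₀ne : ∑ l ∈ S₀, x l ≠ mval S₀.card := by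
        simpa [h𝒩] using hS₀
      refine ⟨∑ l ∈ S₀, x l - mval S₀.card, ?_, ?_⟩
      · have := hx.2 S₀
        cases' lt_or_eq_of_le this with h h
        · linarith
        · exact absurd h.symm hS₀ne
      · intro S hS
        exact hmin S (by simp [h𝒩, hS])
  -- perturbation
  set d : Fin n → ℝ := fun l => if l = i then ε else if l = j then -ε else 0 with hd
  have hdS : ∀ S : Finset (Fin n),
      ∑ l ∈ S, d l = (if i ∈ S then ε else 0) - (if j ∈ S then ε else 0) := by
    intro S
    have hpt : ∀ l, d l = (if l = i then ε else 0) - (if l = j then ε else 0) := by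
      intro l
      by_cases h1 : l = i <;> by_cases h2 : l = j
      · exact absurd (h1 ▸ h2 ▸ rfl : i = j) hij
      · simp [hd, h1, h2, hij]
      · simp [hd, h1, h2, Ne.symm hij]
      · simp [hd, h1, h2]
    rw [Finset.sum_congr rfl (fun l _ => hpt l), Finset.sum_sub_distrib,
      Finset.sum_ite_eq' S i (fun _ => ε), Finset.sum_ite_eq' S j (fun _ => ε)]
  have hdsum : ∀ S : Finset (Fin n), (i ∈ S ↔ j ∈ S) → ∑ l ∈ S, d l = 0 := by
    intro S hiff
    rw [hdS]
    by_cases h : i ∈ S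
    · simp [h, hiff.1 h]
    · have hj' : j ∉ S := fun hjmem => h (hiff.2 hjmem)
      simp [h, hj']
  have habs : ∀ S : Finset (Fin n), |∑ l ∈ S, d l| ≤ ε := by
    intro S
    rw [hdS]
    by_cases h1 : i ∈ S <;> by_cases h2 : j ∈ S <;> simp [h1, h2, abs_of_nonneg, le_of_lt hε] <;>
      · rw [abs_of_nonneg (le_of_lt hε)]
  -- membership of x ± d in H
  have hmem : ∀ s : ℝ, s = 1 ∨ s = -1 → x + s • d ∈ Hset n := by
    intro s hs
    constructor
    · have : ∑ l, (x + s • d) l = (∑ l, x l) + s * ∑ l, d l := by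
        simp [Finset.sum_add_distrib, Finset.mul_sum]
      rw [this, hdsum univ (by simp), hx.1]; ring
    · intro S
      have hsplit : ∑ l ∈ S, (x + s • d) l = (∑ l ∈ S, x l) + s * ∑ l ∈ S, d l := by
        simp [Finset.sum_add_distrib, Finset.mul_sum]
      rw [hsplit]
      by_cases hiff : (i ∈ S ↔ j ∈ S)
      · rw [hdsum S hiff, mul_zero, add_zero]; exact hx.2 S
      · -- S is not tight
        have hnt : ∑ l ∈ S, x l ≠ mval S.card := by
          intro ht
          rcases hkey S ht with h | h
          · exact hiff ⟨fun hh => absurd (h hh) hiS, fun hh => absurd (h hh) hjS⟩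
          · exact hiff ⟨fun _ => h hjT, fun _ => h hiT⟩
        have h1 := hslack S hnt
        have h2 := habs S
        have h3 : |s| = 1 := by rcases hs with rfl | rfl <;> simp
        have : |s * ∑ l ∈ S, d l| ≤ ε := by rw [abs_mul, h3, one_mul]; exact h2
        have := neg_le_of_abs_le this
        linarith
  have hy := hmem 1 (Or.inl rfl)
  have hz := hmem (-1) (Or.inr rfl)
  have hseg : x ∈ openSegment ℝ (x + (1:ℝ) • d) (x + (-1:ℝ) • d) := by
    refine ⟨1/2, 1/2, by norm_num, by norm_num, by norm_num, ?_⟩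
    funext l
    simp only [Pi.add_apply, Pi.smul_apply, smul_eq_mul]
    ring
  have := (hext _ hy _ hz hseg).1
  have : (x + (1:ℝ) • d) i = x i := by rw [this]
  simp only [Pi.add_apply, Pi.smul_apply, smul_eq_mul, one_mul, hd] at this
  simp at this
  exact absurd this (ne_of_gt hε)

theorem extreme_is_vertex {n : ℕ} {x : Fin n → ℝ}
    (hx : x ∈ Set.extremePoints ℝ (Hset n)) : x ∈ Set.range (permuVertex n) := by
  classical
  obtain ⟨hxH, hext⟩ := hx
  have hflag := tight_flag hxH (fun y hy z hz hseg =>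
    ⟨hext hy hz hseg, hext hz hy (by rw [openSegment_symm]; exact hseg)⟩)
  -- choose a flag
  set F : ℕ → Finset (Fin n) := fun k =>
    if h : k ≤ n then (hflag k h).choose else Finset.univ with hF
  have hFt : ∀ k (h : k ≤ n), (∑ l ∈ F k, x l = mval (F k).card) ∧ (F k).card = k := by
    intro k h
    simp only [hF, dif_pos h]
    exact (hflag k h).choose_spec
  have hstep : ∀ k : ℕ, k < n → ∃ i : Fin n, i ∉ F k ∧ F (k+1) = insert i (F k) := by
    intro k hk
    have h1 := hFt k (le_of_lt hk)
    have h2 := hFt (k+1) hk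
    have hsub : F k ⊆ F (k+1) := by
      rcases tight_chain hxH h1.1 h2.1 with h | h
      · exact h
      · exact absurd (Finset.card_le_card h) (by omega)
    have hcard : (F (k+1) \ F k).card = 1 := by
      rw [Finset.card_sdiff_of_subset hsub, h1.2, h2.2]; omega
    obtain ⟨i, hi⟩ := Finset.card_eq_one.1 hcard
    refine ⟨i, ?_, ?_⟩
    · have : i ∈ F (k+1) \ F k := hi ▸ Finset.mem_singleton_self i
      exact (Finset.mem_sdiff.1 this).2
    · rw [← Finset.sdiff_union_of_subset hsub, hi, Finset.insert_eq]
  -- the function g sending k to the new element at step k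
  set g : Fin n → Fin n := fun k => (hstep k k.2).choose with hg
  have hgspec : ∀ k : Fin n, g k ∉ F k ∧ F (k+1) = insert (g k) (F k) :=
    fun k => (hstep k k.2).choose_spec
  have hval : ∀ k : Fin n, x (g k) = (k : ℕ) + 1 := by
    intro k
    have h1 := hFt k (le_of_lt k.2)
    have h2 := hFt ((k:ℕ)+1) k.2
    have hins := (hgspec k).2
    have hnot := (hgspec k).1
    have : ∑ l ∈ F ((k:ℕ)+1), x l = x (g k) + ∑ l ∈ F k, x l := by
      rw [hins, Finset.sum_insert hnot]
    rw [h1.1, h2.1, h1.2, h2.2] at this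
    have hmv : mval ((k:ℕ)+1) - mval (k:ℕ) = (k:ℕ) + 1 := by
      unfold mval; push_cast; ring
    linarith
  have hginj : Function.Injective g := by
    intro a b hab
    have h1 := hval a
    rw [hab, hval b] at h1
    have h2 : (a : ℕ) = (b : ℕ) := by
      have : ((a:ℕ):ℝ) = ((b:ℕ):ℝ) := by linarith
      exact_mod_cast this
    exact Fin.val_injective h2
  have hgbij : Function.Bijective g := (Finite.injective_iff_bijective).1 hginj
  set e : Equiv.Perm (Fin n) := Equiv.ofBijective g hgbij with he
  refine ⟨e, ?_⟩
  funext i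
  have hgi : g (e.symm i) = i := e.apply_symm_apply i
  have := hval (e.symm i)
  rw [hgi] at this
  rw [permuVertex, this]
  norm_num

theorem perm_eq_H (n : ℕ) : permutohedron n = Hset n := by
  apply le_antisymm
  · exact convexHull_min (Set.range_subset_iff.2 (vertex_mem_H n)) (convex_H n)
  · have hkm := closure_convexHull_extremePoints (compact_H n) (convex_H n)
    have hsub : (Hset n).extremePoints ℝ ⊆ Set.range (permuVertex n) :=
      fun x hx => extreme_is_vertex hx
    calc Hset n = closure (convexHull ℝ ((Hset n).extremePoints ℝ)) := hkm.symm
      _ ⊆ closure (convexHull ℝ (Set.range (permuVertex n))) :=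
          closure_mono (convexHull_mono hsub)
      _ = permutohedron n :=
          ((Set.finite_range _).isClosed_convexHull (𝕜 := ℝ)).closure_eq

theorem single_diff_mem {n : ℕ} (a b : Fin n) :
    (Pi.single a 1 - Pi.single b 1 : Fin n → ℝ) ∈
      (affineSpan ℝ (Set.range (permuVertex n))).direction := by
  classical
  rcases eq_or_ne a b with rfl | hab
  · simp
  · have hd : permuVertex n (Equiv.swap a b) - permuVertex n 1 ∈
        (affineSpan ℝ (Set.range (permuVertex n))).direction := by
      have h1 := subset_affineSpan ℝ (Set.range (permuVertex n)) ⟨Equiv.swap a b, rfl⟩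
      have h2 := subset_affineSpan ℝ (Set.range (permuVertex n)) ⟨1, rfl⟩
      simpa using AffineSubspace.vsub_mem_direction h1 h2
    have hc : permuVertex n (Equiv.swap a b) - permuVertex n 1
        = (((b : ℕ) : ℝ) - ((a : ℕ) : ℝ)) • (Pi.single a 1 - Pi.single b 1 : Fin n → ℝ) := by
      funext l
      simp only [Pi.sub_apply, Pi.smul_apply, smul_eq_mul, permuVertex, Equiv.Perm.one_def,
        Equiv.swap_inv, Equiv.refl_apply, Equiv.Perm.inv_def, Equiv.symm_swap, Equiv.refl_symm]
      rcases eq_or_ne l a with rfl | hla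
      · rw [Equiv.swap_apply_left]
        simp [Pi.single_apply, hab, Ne.symm hab]
      · rcases eq_or_ne l b with rfl | hlb
        · rw [Equiv.swap_apply_right]
          simp [Pi.single_apply, hab, Ne.symm hab]
        · rw [Equiv.swap_apply_of_ne_of_ne hla hlb]
          simp [Pi.single_apply, Ne.symm hla, Ne.symm hlb]
    have hne : (((b : ℕ) : ℝ) - ((a : ℕ) : ℝ)) ≠ 0 := by
      intro h
      apply hab
      apply Fin.val_injective
      have h2 : ((a : ℕ) : ℝ) = ((b : ℕ) : ℝ) := by linarith
      exact_mod_cast h2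
    have := Submodule.smul_mem _ (((b : ℕ) : ℝ) - ((a : ℕ) : ℝ))⁻¹ (hc ▸ hd)
    rwa [smul_smul, inv_mul_cancel₀ hne, one_smul] at this

theorem span_perm (n : ℕ) (hn : 1 ≤ n) :
    (affineSpan ℝ (permutohedron n) : Set (Fin n → ℝ)) = {x | ∑ i, x i = mval n} := by
  classical
  have hspan : affineSpan ℝ (permutohedron n) = affineSpan ℝ (Set.range (permuVertex n)) := by
    rw [permutohedron, affineSpan_convexHull]
  rw [hspan]
  apply le_antisymm
  · -- affine span is inside the hyperplane
    have : affineSpan ℝ (Set.range (permuVertex n)) ≤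
        { carrier := {x : Fin n → ℝ | ∑ i, x i = mval n},
          smul_vsub_vadd_mem' := by
            intro c p1 p2 p3 h1 h2 h3
            simp only [Set.mem_setOf_eq] at *
            have he : ∑ i, (c • (p1 -ᵥ p2) +ᵥ p3) i
                = ∑ i, (c * (p1 i - p2 i) + p3 i) := by
              apply Finset.sum_congr rfl
              intro i _
              rfl
            rw [he, Finset.sum_add_distrib, ← Finset.mul_sum, Finset.sum_sub_distrib,
              h1, h2, h3]
            ring } := by
      apply affineSpan_le.2
      rintro x ⟨σ, rfl⟩
      exact (vertex_mem_H n σ).1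
    exact this
  · intro x hx
    have hx : ∑ i, x i = mval n := hx
    set i0 : Fin n := ⟨0, hn⟩ with hi0
    have hv0 : permuVertex n 1 ∈ affineSpan ℝ (Set.range (permuVertex n)) :=
      subset_affineSpan ℝ _ ⟨1, rfl⟩
    set y : Fin n → ℝ := x - permuVertex n 1 with hy
    have hysum : ∑ i, y i = 0 := by
      have h1 : ∑ i, permuVertex n 1 i = mval n := (vertex_mem_H n 1).1
      simp [hy, Finset.sum_sub_distrib, hx, h1]
    have hymem : y ∈ (affineSpan ℝ (Set.range (permuVertex n))).direction := by
      have hrepr : y = ∑ a : Fin n, (y a) • (Pi.single a 1 - Pi.single i0 1 : Fin n → ℝ) := by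
        funext l
        rw [Finset.sum_apply]
        simp only [Pi.smul_apply, Pi.sub_apply, smul_eq_mul, Pi.single_apply, mul_sub]
        rw [Finset.sum_sub_distrib]
        have e1 : ∑ a : Fin n, y a * (if l = a then (1:ℝ) else 0) = y l := by
          rw [Finset.sum_congr rfl (fun a _ => by rw [mul_ite, mul_one, mul_zero])]
          simp [Finset.sum_ite_eq]
        have e2 : ∑ a : Fin n, y a * (if l = i0 then (1:ℝ) else 0) = 0 := by
          by_cases h : l = i0 <;> simp [h, hysum]
        rw [e1, e2, sub_zero]
      rw [hrepr]
      exact Submodule.sum_mem _ fun a _ => Submodule.smul_mem _ _ (single_diff_mem a i0)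
    have := AffineSubspace.vadd_mem_of_mem_direction hymem hv0
    simpa [hy] using this

/-- The intrinsic frontier of the permutohedron is the union of its facets `F_S`;
equivalently a point of the permutohedron is in the intrinsic interior iff all the
half-space inequalities are strict. -/
theorem statement8 (n : ℕ) (hn : 1 ≤ n) :
    (intrinsicFrontier ℝ (permutohedron n) =
      ⋃ (S : Finset (Fin n)) (_ : S.Nonempty) (_ : S ≠ Finset.univ), facet n S) ∧
    (∀ x ∈ permutohedron n,
      (x ∈ intrinsicInterior ℝ (permutohedron n) ↔
        ∀ S : Finset (Fin n), S.Nonempty → S ≠ Finset.univ →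
          ((S.card : ℝ) * ((S.card : ℝ) + 1)) / 2 < ∑ i ∈ S, x i)) := by
  classical
  have hPH := perm_eq_H n
  have hspan := span_perm n hn
  have hPclosed : IsClosed (permutohedron n) :=
    (Set.finite_range (permuVertex n)).isClosed_convexHull (𝕜 := ℝ)
  -- barycenter
  set c : Fin n → ℝ := fun _ => ((n : ℝ) + 1) / 2 with hc
  have hcsumS : ∀ S : Finset (Fin n), ∑ i ∈ S, c i = S.card * (((n : ℝ) + 1) / 2) := by
    intro S; simp [hc, Finset.sum_const, mul_comm]
  have hcH : c ∈ Hset n := by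
    constructor
    · rw [hcsumS univ]
      simp [mval, Finset.card_univ]
      ring
    · intro S
      rw [hcsumS S, mval]
      have h1 : (S.card : ℝ) ≤ n := by
        exact_mod_cast (Finset.card_le_card (Finset.subset_univ S)).trans_eq
          (by simp [Finset.card_univ])
      nlinarith [Nat.cast_nonneg (α := ℝ) S.card]
  -- part 2
  have part2 : ∀ x ∈ permutohedron n,
      (x ∈ intrinsicInterior ℝ (permutohedron n) ↔
        ∀ S : Finset (Fin n), S.Nonempty → S ≠ Finset.univ →
          ((S.card : ℝ) * ((S.card : ℝ) + 1)) / 2 < ∑ i ∈ S, x i) := by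
    intro x hxP
    have hxspan : x ∈ affineSpan ℝ (permutohedron n) := subset_affineSpan ℝ _ hxP
    constructor
    · -- interior → strict
      intro hxint S hSne hSu
      by_contra hle
      push_neg at hle
      have hge : mval S.card ≤ ∑ i ∈ S, x i := (hPH ▸ hxP).2 S
      have heq : ∑ i ∈ S, x i = mval S.card := le_antisymm (by rw [mval]; exact hle) hge
      -- S proper nonempty: cards
      have hk0 : 0 < S.card := Finset.card_pos.2 hSne
      have hkn : S.card < n := by
        have := Finset.card_lt_card (Finset.ssubset_univ_iff.2 hSu)
        simpa [Finset.card_univ] using this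
      -- get a point beyond x inside the permutohedron
      obtain ⟨y, hy, hyx⟩ := mem_intrinsicInterior.1 hxint
      have hφmem : ∀ t : ℝ, x + t • (x - c) ∈ affineSpan ℝ (permutohedron n) := by
        intro t
        have hxs : ∑ i, x i = mval n := by
          have h := hxspan
          rw [← SetLike.mem_coe, hspan] at h
          exact h
        have hcs : ∑ i, c i = mval n := hcH.1
        rw [← SetLike.mem_coe, hspan]
        show ∑ i, (x + t • (x - c)) i = mval n
        have hsp : ∑ i, (x + t • (x - c)) i = (∑ i, x i) + t * ((∑ i, x i) - ∑ i, c i) := by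
          simp [Finset.sum_add_distrib, Finset.sum_sub_distrib, Finset.mul_sum, mul_sub]
        rw [hsp, hxs, hcs]
        ring
      set φ : ℝ → affineSpan ℝ (permutohedron n) := fun t => ⟨x + t • (x - c), hφmem t⟩ with hφ
      have hφcont : Continuous φ := by
        apply Continuous.subtype_mk
        exact continuous_const.add (continuous_id.smul continuous_const)
      have hφ0 : φ 0 = y := by
        apply Subtype.ext
        show x + (0:ℝ) • (x - c) = (y : Fin n → ℝ)
        rw [hyx]
        simp
      have hnhds : φ ⁻¹' (interior ((↑) ⁻¹' (permutohedron n) :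
          Set (affineSpan ℝ (permutohedron n)))) ∈ nhds (0 : ℝ) := by
        apply (isOpen_interior.preimage hφcont).mem_nhds
        rw [Set.mem_preimage, hφ0]
        exact hy
      obtain ⟨ε, hε, hball⟩ := Metric.mem_nhds_iff.1 hnhds
      set t := ε / 2 with ht
      have htpos : 0 < t := by positivity
      have htmem : φ t ∈ interior ((↑) ⁻¹' (permutohedron n) :
          Set (affineSpan ℝ (permutohedron n))) := by
        apply hball
        have hd : dist t 0 < ε := by
          rw [Real.dist_eq, sub_zero, abs_of_pos htpos, ht]
          linarith
        exact Metric.mem_ball.2 hd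
      have hzP : x + t • (x - c) ∈ permutohedron n := by
        have h := interior_subset htmem
        exact h
      have hzH := (hPH ▸ hzP).2 S
      have hsplit : ∑ i ∈ S, (x + t • (x - c)) i
          = (∑ i ∈ S, x i) + t * ((∑ i ∈ S, x i) - ∑ i ∈ S, c i) := by
        simp [Finset.sum_add_distrib, Finset.sum_sub_distrib, Finset.mul_sum, mul_sub]
      rw [hsplit, heq, hcsumS S] at hzH
      have hclt : mval S.card < S.card * (((n : ℝ) + 1) / 2) := by
        rw [mval]
        have h1 : (1:ℝ) ≤ (S.card : ℝ) := by exact_mod_cast hk0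
        have h2 : (S.card : ℝ) + 1 ≤ n := by exact_mod_cast hkn
        nlinarith
      nlinarith
    · -- strict → interior
      intro hstrict
      set V : Set (Fin n → ℝ) := ⋂ S : Finset (Fin n),
        {y | S.Nonempty → S ≠ Finset.univ → mval S.card < ∑ i ∈ S, y i} with hV
      have hVopen : IsOpen V := by
        apply isOpen_iInter_of_finite
        intro S
        by_cases h1 : S.Nonempty
        · by_cases h2 : S ≠ Finset.univ
          · have : {y : Fin n → ℝ | S.Nonempty → S ≠ Finset.univ → mval S.card < ∑ i ∈ S, y i}
                = {y | mval S.card < ∑ i ∈ S, y i} := by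
              ext y; simp [h1, h2]
            rw [this]
            exact isOpen_lt continuous_const (by continuity)
          · have : {y : Fin n → ℝ | S.Nonempty → S ≠ Finset.univ → mval S.card < ∑ i ∈ S, y i}
                = Set.univ := by
              ext y; simp [h2]
            rw [this]; exact isOpen_univ
        · have : {y : Fin n → ℝ | S.Nonempty → S ≠ Finset.univ → mval S.card < ∑ i ∈ S, y i}
              = Set.univ := by
            ext y; simp [h1]
          rw [this]; exact isOpen_univ
      have hsubset : ((↑) ⁻¹' V : Set (affineSpan ℝ (permutohedron n))) ⊆
          ((↑) ⁻¹' (permutohedron n)) := by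
        rintro ⟨y, hymem⟩ hyV
        simp only [Set.mem_preimage] at hyV ⊢
        have hysum : ∑ i, y i = mval n := by
          have h := hymem
          rw [← SetLike.mem_coe, hspan] at h
          exact h
        rw [hPH]
        refine ⟨hysum, ?_⟩
        intro S
        rcases Finset.eq_empty_or_nonempty S with rfl | hSne
        · simp [mval]
        · rcases eq_or_ne S Finset.univ with rfl | hSu
          · rw [Finset.card_univ, Fintype.card_fin]
            exact le_of_eq hysum.symm
          · exact le_of_lt ((Set.mem_iInter.1 hyV S) hSne hSu)
      have hxint : (⟨x, hxspan⟩ : affineSpan ℝ (permutohedron n)) ∈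
          interior ((↑) ⁻¹' (permutohedron n) : Set (affineSpan ℝ (permutohedron n))) := by
        apply interior_maximal hsubset (hVopen.preimage continuous_subtype_val)
        simp only [Set.mem_preimage]
        rw [hV]
        refine Set.mem_iInter.2 fun S => fun hSne hSu => ?_
        have := hstrict S hSne hSu
        rw [mval]
        exact this
      exact mem_intrinsicInterior.2 ⟨⟨x, hxspan⟩, hxint, rfl⟩
  -- part 1
  refine ⟨?_, part2⟩
  have hfr : intrinsicFrontier ℝ (permutohedron n)
      = permutohedron n \ intrinsicInterior ℝ (permutohedron n) := by
    rw [intrinsicFrontier, intrinsicInterior]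
    have hclosed : IsClosed ((↑) ⁻¹' (permutohedron n) :
        Set (affineSpan ℝ (permutohedron n))) :=
      hPclosed.preimage continuous_subtype_val
    rw [hclosed.frontier_eq, Set.image_diff Subtype.coe_injective]
    congr 1
    apply Set.eq_of_subset_of_subset
    · exact Set.image_preimage_subset _ _
    · intro z hz
      exact ⟨⟨z, subset_affineSpan ℝ _ hz⟩, hz, rfl⟩
  rw [hfr]
  ext x
  simp only [Set.mem_diff, Set.mem_iUnion]
  constructor
  · rintro ⟨hxP, hxnint⟩
    have hnot := (not_congr (part2 x hxP)).1 hxnint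
    push_neg at hnot
    obtain ⟨S, hSne, hSu, hle⟩ := hnot
    refine ⟨S, hSne, hSu, hxP, ?_⟩
    have hge : mval S.card ≤ ∑ i ∈ S, x i := (hPH ▸ hxP).2 S
    exact le_antisymm (by rw [← mval] at hle; exact hle) (by rw [mval] at hge; exact hge)
  · rintro ⟨S, hSne, hSu, hxP, heq⟩
    refine ⟨hxP, ?_⟩
    intro hxint
    have := (part2 x hxP).1 hxint S hSne hSu
    rw [heq] at this
    exact lt_irrefl _ this
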